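/- Let L ≥ 1 and let n₀ = n, n₁, …, n_{L−1} be positive layer dimensions. Let φ : ℝ → ℝ be convex on all of ℝ and monotone (nondecreasing). For l = 1, …, L−1 let W^l be an n_l × n_{l−1} real matrix all of whose entries are nonnegative, V^l an n_l × n real matrix, and ω^l ∈ ℝ^{n_l}. Define the layer activations recursively by z⁰(x) = x and z^l(x) = φ applied componentwise to (W^l · z^{l−1}(x) + V^l · x + ω^l) for l = 1, …, L−1. Then for every l ∈ {0, 1, …, L−1} and every index i, the component map x ↦ (z^l(x)) i is convex on all of ℝ^n. -/

import Mathlib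

open Matrix

private lemma convexOn_finset_sum {n : ℕ} {ι : Type*} (t : Finset ι)
    (f : ι → (Fin n → ℝ) → ℝ)
    (hf : ∀ i ∈ t, ConvexOn ℝ Set.univ (f i)) :
    ConvexOn ℝ Set.univ (fun x => ∑ i ∈ t, f i x) := by
  classical
  induction t using Finset.induction with
  | empty => simpa using convexOn_const 0 convex_univ
  | insert _ _ hnot ih =>
    simp only [Finset.sum_insert hnot]
    exact (hf _ (Finset.mem_insert_self _ _)).add
      (ih fun i hi => hf i (Finset.mem_insert_of_mem hi))

/-- In an input-convex neural network `z⁰ = x`,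
`z^l = φ(W^l z^{l−1} + V^l x + ω^l)` for `l = 1, …, L−1`,
with convex nondecreasing activation `φ` and elementwise nonnegative
weight matrices `W^l`, every component of every layer activation `z^l`
is a convex function of the input `x`.
Here `dims l` is the width `n_l` of layer `l` (so `dims 0 = n` is the input
dimension), and `W l`, `V l`, `ω l` are the data of layer `l + 1`. -/
theorem icnn_layers_convex
    (L : ℕ) (hL : 1 ≤ L)
    (dims : ℕ → ℕ) (hdims : ∀ l, l ≤ L - 1 → 0 < dims l)
    (φ : ℝ → ℝ) (hφ_convex : ConvexOn ℝ Set.univ φ) (hφ_mono : Monotone φ)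
    (W : (l : ℕ) → Matrix (Fin (dims (l + 1))) (Fin (dims l)) ℝ)
    (hW : ∀ l, l + 1 ≤ L - 1 → ∀ i j, 0 ≤ W l i j)
    (V : (l : ℕ) → Matrix (Fin (dims (l + 1))) (Fin (dims 0)) ℝ)
    (ω : (l : ℕ) → Fin (dims (l + 1)) → ℝ)
    (z : (l : ℕ) → (Fin (dims 0) → ℝ) → (Fin (dims l) → ℝ))
    (hz0 : ∀ x, z 0 x = x)
    (hzrec : ∀ l, l + 1 ≤ L - 1 → ∀ x,
      z (l + 1) x = fun i => φ (((W l).mulVec (z l x) + (V l).mulVec x + ω l) i)) :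
    ∀ l, l ≤ L - 1 → ∀ i : Fin (dims l),
      ConvexOn ℝ Set.univ (fun x => z l x i) := by
  intro l
  induction l with
  | zero =>
    intro _ i
    simp only [hz0]
    exact (LinearMap.proj i : (Fin (dims 0) → ℝ) →ₗ[ℝ] ℝ).convexOn convex_univ
  | succ l ih =>
    intro hl i
    have hl' : l ≤ L - 1 := le_of_lt (Nat.lt_of_lt_of_le (Nat.lt_succ_self l) hl)
    have affine : ConvexOn ℝ Set.univ (fun x : Fin (dims 0) → ℝ => (V l).mulVec x i) :=
      ((LinearMap.proj i).comp (Matrix.mulVecLin (V l))).convexOn convex_univ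
    have key : ConvexOn ℝ Set.univ
        (fun x => ((W l).mulVec (z l x) + (V l).mulVec x + ω l) i) := by
      have hsum : ConvexOn ℝ Set.univ (fun x => (W l).mulVec (z l x) i) := by
        simp only [mulVec, dotProduct]
        exact convexOn_finset_sum _ _ fun j _ => (ih hl' j).smul (hW l hl i j)
      exact (hsum.add affine).add (convexOn_const (ω l i) convex_univ)
    have heq : (fun x => z (l + 1) x i)
        = fun x => φ (((W l).mulVec (z l x) + (V l).mulVec x + ω l) i) := by
      funext x
      simp [hzrec l hl x]
    rw [heq]
    exact ⟨convex_univ, fun x _ y _ a b ha hb hab =>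
      (hφ_mono (key.2 (Set.mem_univ x) (Set.mem_univ y) ha hb hab)).trans
        (hφ_convex.2 (Set.mem_univ _) (Set.mem_univ _) ha hb hab)⟩
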